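/- Fix 0 < q < 1 and k ∈ ℕ. Let G_1, ..., G_m be i.i.d. geometric with parameter 1-q, and let |G_i| = #{j : G_j = i}. Then the probability that the k sets G_0, G_1, ..., G_{k-1} are strictly the k largest among all G_i (i.e., min(|G_0|,...,|G_{k-1}|) > |G_i| for all i ≥ k) is 1 - O(e^{-cm}) for some constant c > 0 depending only on q and k. -/

import Mathlib

open MeasureTheory ProbabilityTheory

section Helpers

variable {Ω : Type} [MeasurableSpace Ω] {μ : Measure Ω}

lemma my_integral_ite [IsProbabilityMeasure μ] (P : Ω → Prop) [DecidablePred P]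
    (hP : MeasurableSet {ω | P ω}) :
    ∫ ω, (if P ω then (1:ℝ) else 0) ∂μ = (μ {ω | P ω}).toReal := by
  rw [← measureReal_def, ← integral_indicator_one hP]
  refine integral_congr_ae (ae_of_all _ fun ω => ?_)
  by_cases hp : P ω <;> simp [Set.indicator_apply, Set.mem_setOf_eq, hp]

lemma mgf_of_01 [IsProbabilityMeasure μ] {X : Ω → ℝ} (hX : Measurable X)
    (h01 : ∀ ω, X ω = 0 ∨ X ω = 1) (s : ℝ) :
    mgf X μ s = 1 + (Real.exp s - 1) * ∫ ω, X ω ∂μ := by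
  have hXint : Integrable X μ := by
    refine (integrable_const (1:ℝ)).mono' hX.aestronglyMeasurable (ae_of_all _ fun ω => ?_)
    rcases h01 ω with h | h <;> simp [h]
  have hpt : ∀ ω, Real.exp (s * X ω) = 1 + (Real.exp s - 1) * X ω := by
    intro ω; rcases h01 ω with h | h <;> simp [h]
  rw [mgf]
  simp_rw [hpt]
  rw [integral_add (integrable_const 1) (hXint.const_mul _), integral_const,
    integral_const_mul]
  simp

lemma tail_upper [IsProbabilityMeasure μ] {m : ℕ} {X : Fin m → Ω → ℝ}
    (hmeas : ∀ j, Measurable (X j))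
    (hindep : iIndepFun X μ)
    (h01 : ∀ j ω, X j ω = 0 ∨ X j ω = 1)
    {p s θ : ℝ} (hs : 0 ≤ s) (hp : ∀ j, ∫ ω, X j ω ∂μ ≤ p) :
    (μ {ω | θ * m ≤ ∑ j, X j ω}).toReal ≤ Real.exp ((p * (Real.exp s - 1) - s * θ) * m) := by
  set S : Ω → ℝ := fun ω => ∑ j, X j ω with hSdef
  have hSmeas : Measurable S := Finset.measurable_sum _ fun j _ => hmeas j
  have hSle : ∀ ω, S ω ≤ m := by
    intro ω
    have := Finset.sum_le_card_nsmul Finset.univ (fun j => X j ω) 1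
      (fun j _ => by rcases h01 j ω with h | h <;> simp [h])
    simpa [Finset.card_univ] using this
  have hint : Integrable (fun ω => Real.exp (s * S ω)) μ := by
    refine (integrable_const (Real.exp (s * m))).mono'
      ((hSmeas.const_mul s).exp).aestronglyMeasurable (ae_of_all _ fun ω => ?_)
    rw [Real.norm_eq_abs, Real.abs_exp]
    exact Real.exp_le_exp.mpr (mul_le_mul_of_nonneg_left (hSle ω) hs)
  have hmgf : mgf S μ s = ∏ j, mgf (X j) μ s := by
    have hfun : S = ∑ j, X j := by ext ω; simp [hSdef]
    rw [hfun, hindep.mgf_sum hmeas]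
  have h1 : (μ {ω | θ * m ≤ S ω}).toReal ≤ Real.exp (-s * (θ * m)) * mgf S μ s :=
    measure_ge_le_exp_mul_mgf (θ * m) hs hint
  have hexps : 0 ≤ Real.exp s - 1 := by
    have := Real.one_le_exp hs; linarith
  have h2 : ∀ j : Fin m, mgf (X j) μ s ≤ Real.exp (p * (Real.exp s - 1)) := by
    intro j
    rw [mgf_of_01 (hmeas j) (h01 j)]
    have hIp : ∫ ω, X j ω ∂μ ≤ p := hp j
    have : (Real.exp s - 1) * ∫ ω, X j ω ∂μ ≤ (Real.exp s - 1) * p :=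
      mul_le_mul_of_nonneg_left hIp hexps
    have h3 : p * (Real.exp s - 1) + 1 ≤ Real.exp (p * (Real.exp s - 1)) :=
      Real.add_one_le_exp _
    nlinarith
  have h0 : ∀ j ∈ Finset.univ, (0:ℝ) ≤ mgf (X j) μ s := by
    intro j _
    rw [mgf_of_01 (hmeas j) (h01 j)]
    have hI : 0 ≤ ∫ ω, X j ω ∂μ :=
      integral_nonneg fun ω => by rcases h01 j ω with h | h <;> simp [h]
    nlinarith
  calc (μ {ω | θ * m ≤ S ω}).toReal
      ≤ Real.exp (-s * (θ * m)) * mgf S μ s := h1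
    _ ≤ Real.exp (-s * (θ * m)) * ∏ j, Real.exp (p * (Real.exp s - 1)) := by
        rw [hmgf]
        exact mul_le_mul_of_nonneg_left
          (Finset.prod_le_prod h0 fun j _ => h2 j) (Real.exp_pos _).le
    _ = Real.exp ((p * (Real.exp s - 1) - s * θ) * m) := by
        rw [Finset.prod_const, Finset.card_univ, Fintype.card_fin,
          ← Real.exp_nat_mul, ← Real.exp_add]
        ring_nf

lemma tail_lower [IsProbabilityMeasure μ] {m : ℕ} {X : Fin m → Ω → ℝ}
    (hmeas : ∀ j, Measurable (X j))
    (hindep : iIndepFun X μ)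
    (h01 : ∀ j ω, X j ω = 0 ∨ X j ω = 1)
    {p s θ : ℝ} (hs : 0 ≤ s) (hp : ∀ j, p ≤ ∫ ω, X j ω ∂μ) :
    (μ {ω | ∑ j, X j ω ≤ θ * m}).toReal ≤ Real.exp ((p * (Real.exp (-s) - 1) + s * θ) * m) := by
  set S : Ω → ℝ := fun ω => ∑ j, X j ω with hSdef
  have hSmeas : Measurable S := Finset.measurable_sum _ fun j _ => hmeas j
  have hSnonneg : ∀ ω, 0 ≤ S ω :=
    fun ω => Finset.sum_nonneg fun j _ => by rcases h01 j ω with h | h <;> simp [h]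
  have hint : Integrable (fun ω => Real.exp (-s * S ω)) μ := by
    refine (integrable_const (1:ℝ)).mono'
      ((hSmeas.const_mul (-s)).exp).aestronglyMeasurable (ae_of_all _ fun ω => ?_)
    rw [Real.norm_eq_abs, Real.abs_exp, ← Real.exp_zero]
    apply Real.exp_le_exp.mpr
    have := mul_nonneg hs (hSnonneg ω)
    nlinarith
  have hmgf : mgf S μ (-s) = ∏ j, mgf (X j) μ (-s) := by
    have hfun : S = ∑ j, X j := by ext ω; simp [hSdef]
    rw [hfun, hindep.mgf_sum hmeas]
  have h1 : (μ {ω | S ω ≤ θ * m}).toReal ≤ Real.exp (-(-s) * (θ * m)) * mgf S μ (-s) :=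
    measure_le_le_exp_mul_mgf (θ * m) (neg_nonpos.mpr hs) hint
  have hexps : Real.exp (-s) - 1 ≤ 0 := by
    have : Real.exp (-s) ≤ 1 := Real.exp_le_one_iff.mpr (neg_nonpos.mpr hs)
    linarith
  have h2 : ∀ j : Fin m, mgf (X j) μ (-s) ≤ Real.exp (p * (Real.exp (-s) - 1)) := by
    intro j
    rw [mgf_of_01 (hmeas j) (h01 j)]
    have hIp : p ≤ ∫ ω, X j ω ∂μ := hp j
    have h3 : p * (Real.exp (-s) - 1) + 1 ≤ Real.exp (p * (Real.exp (-s) - 1)) :=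
      Real.add_one_le_exp _
    nlinarith
  have h0 : ∀ j ∈ Finset.univ, (0:ℝ) ≤ mgf (X j) μ (-s) := by
    intro j _
    rw [mgf_of_01 (hmeas j) (h01 j)]
    have hI1 : ∫ ω, X j ω ∂μ ≤ 1 := by
      have : ∫ ω, X j ω ∂μ ≤ ∫ _, (1:ℝ) ∂μ := by
        refine integral_mono ?_ (integrable_const 1) ?_
        · refine (integrable_const (1:ℝ)).mono' (hmeas j).aestronglyMeasurable
            (ae_of_all _ fun ω => ?_)
          rcases h01 j ω with h | h <;> simp [h]
        · intro ω; rcases h01 j ω with h | h <;> simp [h]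
      simpa using this
    have hexpos : 0 < Real.exp (-s) := Real.exp_pos _
    nlinarith
  calc (μ {ω | S ω ≤ θ * m}).toReal
      ≤ Real.exp (-(-s) * (θ * m)) * mgf S μ (-s) := h1
    _ ≤ Real.exp (-(-s) * (θ * m)) * ∏ j, Real.exp (p * (Real.exp (-s) - 1)) := by
        rw [hmgf]
        exact mul_le_mul_of_nonneg_left
          (Finset.prod_le_prod h0 fun j _ => h2 j) (Real.exp_pos _).le
    _ = Real.exp ((p * (Real.exp (-s) - 1) + s * θ) * m) := by
        rw [Finset.prod_const, Finset.card_univ, Fintype.card_fin,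
          ← Real.exp_nat_mul, ← Real.exp_add]
        ring_nf

lemma geom_tail [IsProbabilityMeasure μ] (X : Ω → ℕ) (hX : Measurable X) (q : ℝ)
    (hmass : ∀ i, (μ {ω | X ω = i}).toReal = q ^ i * (1 - q)) (M : ℕ) :
    (μ {ω | M ≤ X ω}).toReal = q ^ M := by
  induction M with
  | zero => simp
  | succ M ih =>
    have hsplit : {ω | M ≤ X ω} = {ω | X ω = M} ∪ {ω | M + 1 ≤ X ω} := by
      ext ω; simp only [Set.mem_setOf_eq, Set.mem_union]; omega
    have hdisj : Disjoint {ω | X ω = M} {ω | M + 1 ≤ X ω} :=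
      Set.disjoint_left.mpr fun ω h1 h2 => by
        simp only [Set.mem_setOf_eq] at h1 h2; omega
    have hmeas2 : MeasurableSet {ω | M + 1 ≤ X ω} := by
      have : {ω | M + 1 ≤ X ω} = X ⁻¹' {n | M + 1 ≤ n} := rfl
      exact hX (by trivial)
    have := measure_union (μ := μ) hdisj hmeas2
    rw [← hsplit] at this
    have htr : (μ {ω | M ≤ X ω}).toReal
        = (μ {ω | X ω = M}).toReal + (μ {ω | M + 1 ≤ X ω}).toReal := by
      rw [this, ENNReal.toReal_add (measure_ne_top μ _) (measure_ne_top μ _)]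
    rw [ih, hmass M] at htr
    have : (μ {ω | M + 1 ≤ X ω}).toReal = q ^ M - q ^ M * (1 - q) := by linarith
    rw [this]; ring

lemma toReal_union_le (μ : Measure Ω) [IsProbabilityMeasure μ] (s t : Set Ω) :
    (μ (s ∪ t)).toReal ≤ (μ s).toReal + (μ t).toReal := by
  rw [← ENNReal.toReal_add (measure_ne_top μ s) (measure_ne_top μ t)]
  exact ENNReal.toReal_mono
    (ENNReal.add_ne_top.mpr ⟨measure_ne_top μ s, measure_ne_top μ t⟩)
    (measure_union_le s t)

lemma toReal_biUnion_le {ι : Type*} (μ : Measure Ω) [IsProbabilityMeasure μ]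
    (s : Finset ι) (f : ι → Set Ω) :
    (μ (⋃ i ∈ s, f i)).toReal ≤ ∑ i ∈ s, (μ (f i)).toReal := by
  have h1 : μ (⋃ i ∈ s, f i) ≤ ∑ i ∈ s, μ (f i) := measure_biUnion_finset_le s f
  have h2 : (∑ i ∈ s, μ (f i)) ≠ ⊤ := by
    refine (ENNReal.sum_lt_top.mpr fun i _ => ?_).ne
    exact measure_lt_top μ _
  calc (μ (⋃ i ∈ s, f i)).toReal ≤ (∑ i ∈ s, μ (f i)).toReal := ENNReal.toReal_mono h2 h1
    _ = ∑ i ∈ s, (μ (f i)).toReal := ENNReal.toReal_sum fun i _ => measure_ne_top μ _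

lemma mul_exp_neg_le (c : ℝ) (hc : 0 < c) (x : ℝ) (hx : 0 ≤ x) :
    x * Real.exp (-c * x) ≤ 1 / c := by
  have h1 : c * x + 1 ≤ Real.exp (c * x) := Real.add_one_le_exp _
  have h2 : Real.exp (-c * x) * Real.exp (c * x) = 1 := by
    rw [← Real.exp_add]; ring_nf; exact Real.exp_zero
  have h3 : 0 < Real.exp (c * x) := Real.exp_pos _
  have h4 : 0 < Real.exp (-c * x) := Real.exp_pos _
  rw [le_div_iff₀ hc]
  nlinarith [mul_le_mul_of_nonneg_left h1 h4.le]

end Helpers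

/-- `level G i` is the cardinality `|𝒢ᵢ|` of the level set `{j : G j = i}`. -/
def level {m : ℕ} (G : Fin m → ℕ) (i : ℕ) : ℕ :=
  (Finset.univ.filter (fun j : Fin m => G j = i)).card

set_option maxHeartbeats 1000000

/-- For i.i.d. geometric `G₁, …, G_m` with parameter `1-q`, the probability that the
levels `𝒢₀, …, 𝒢_{k-1}` are strictly the `k` largest among all levels is
`1 - O(e^{-c m})` for some constant `c > 0` depending only on `q` and `k`. -/
theorem largest_levels (q : ℝ) (hq0 : 0 < q) (hq1 : q < 1) (k : ℕ) :
    ∃ c : ℝ, 0 < c ∧ ∃ C : ℝ,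
      ∀ (m : ℕ) (Ω : Type) (_ : MeasurableSpace Ω) (μ : Measure Ω)
        (_ : IsProbabilityMeasure μ) (G : Fin m → Ω → ℕ),
        (∀ j, Measurable (G j)) →
        iIndepFun G μ →
        (∀ j, ∀ i : ℕ, (μ {ω | G j ω = i}).toReal = q ^ i * (1 - q)) →
        1 - C * Real.exp (-c * m) ≤
          (μ {ω | ∀ a b : ℕ, a < k → k ≤ b →
            level (fun j => G j ω) b < level (fun j => G j ω) a}).toReal := by
  classical
  rcases Nat.eq_zero_or_pos k with hk | hk
  · subst hk
    refine ⟨1, one_pos, 0, fun m Ω _ μ _ G hG hind hmass => ?_⟩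
    have huniv : {ω : Ω | ∀ a b : ℕ, a < 0 → 0 ≤ b →
        level (fun j => G j ω) b < level (fun j => G j ω) a} = Set.univ :=
      Set.eq_univ_of_forall fun ω a b ha _ => absurd ha (Nat.not_lt_zero a)
    rw [huniv]
    simp
  obtain ⟨K, rfl⟩ : ∃ K, k = K + 1 := ⟨k - 1, (Nat.succ_pred_eq_of_pos hk).symm⟩
  have hq1' : 0 < 1 - q := by linarith
  set pK : ℝ := q ^ K * (1 - q) with hpKdef
  set pK1 : ℝ := q ^ (K + 1) * (1 - q) with hpK1def
  set t : ℝ := q ^ K * (1 - q) * ((1 + q) / 2) with htdef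
  have hqKpos : (0:ℝ) < q ^ K := pow_pos hq0 K
  have hpKpos : 0 < pK := by positivity
  have hpK1pos : 0 < pK1 := by positivity
  have htpos : 0 < t := by positivity
  have hpK1t : pK1 < t := by
    rw [hpK1def, htdef, pow_succ]
    nlinarith
  have htpK : t < pK := by
    rw [htdef, hpKdef]
    nlinarith
  set s1 : ℝ := Real.log (pK / t) with hs1def
  set s2 : ℝ := Real.log (t / pK1) with hs2def
  have hs1pos : 0 < s1 := Real.log_pos (by rw [lt_div_iff₀ htpos]; linarith)
  have hs2pos : 0 < s2 := Real.log_pos (by rw [lt_div_iff₀ hpK1pos]; linarith)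
  have hexp1 : Real.exp (-s1) = t / pK := by
    rw [hs1def, ← Real.log_inv, Real.exp_log (by positivity)]
    rw [inv_div]
  have hexp2 : Real.exp s2 = t / pK1 := Real.exp_log (by positivity)
  set g1 : ℝ := pK * (Real.exp (-s1) - 1) + s1 * t with hg1def
  set g2 : ℝ := pK1 * (Real.exp s2 - 1) - s2 * t with hg2def
  have hg1neg : g1 < 0 := by
    have hlog : Real.log (pK / t) < pK / t - 1 :=
      Real.log_lt_sub_one_of_pos (by positivity) (by
        intro h
        have : pK = t := by field_simp at h; linarith
        linarith)
    rw [hg1def, hexp1, ← hs1def] at *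
    have h2 : t * (pK / t) = pK := by field_simp
    have h3 : pK * (t / pK) = t := by field_simp
    nlinarith [mul_lt_mul_of_pos_left hlog htpos]
  have hg2neg : g2 < 0 := by
    have hlog : Real.log (pK1 / t) < pK1 / t - 1 :=
      Real.log_lt_sub_one_of_pos (by positivity) (by
        intro h
        have : pK1 = t := by field_simp at h; linarith
        linarith)
    have hloginv : -s2 < pK1 / t - 1 := by
      have hls : -s2 = Real.log (pK1 / t) := by
        rw [hs2def, ← Real.log_inv, inv_div]
      rw [hls]
      exact hlog
    rw [hg2def, hexp2]
    have h2 : t * (pK1 / t) = pK1 := by field_simp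
    have h3 : pK1 * (t / pK1) = t := by field_simp
    nlinarith [mul_lt_mul_of_pos_left hloginv htpos]
  have hlogq : Real.log q < 0 := Real.log_neg hq0 hq1
  set c : ℝ := min (min (-g1) (-g2)) (-Real.log q) / 2 with hcdef
  have hcpos : 0 < c := by
    apply div_pos _ two_pos
    exact lt_min (lt_min (by linarith) (by linarith)) (by linarith)
  have hminle1 : min (min (-g1) (-g2)) (-Real.log q) ≤ -g1 :=
    (min_le_left _ _).trans (min_le_left _ _)
  have hminle2 : min (min (-g1) (-g2)) (-Real.log q) ≤ -g2 :=
    (min_le_left _ _).trans (min_le_right _ _)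
  have hminle3 : min (min (-g1) (-g2)) (-Real.log q) ≤ -Real.log q :=
    min_le_right _ _
  have hc2g1 : g1 ≤ -(2 * c) := by rw [hcdef]; linarith
  have hc2g2 : g2 ≤ -(2 * c) := by rw [hcdef]; linarith
  have hc2q : Real.log q ≤ -(2 * c) := by rw [hcdef]; linarith
  refine ⟨c, hcpos, (K + 1 : ℝ) + 2 / c, fun m Ω mΩ μ hμ G hG hind hmass => ?_⟩
  -- the casted level equals a sum of indicators
  have hcast : ∀ (i : ℕ) (ω : Ω),
      ((level (fun j => G j ω) i : ℕ) : ℝ)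
        = ∑ j : Fin m, if G j ω = i then (1:ℝ) else 0 := by
    intro i ω
    rw [level, Finset.card_filter]
    push_cast
    rfl
  -- measurability and independence of the indicator families
  have hXmeas : ∀ (i : ℕ) (j : Fin m),
      Measurable (fun ω => if G j ω = i then (1:ℝ) else 0) := fun i j =>
    Measurable.ite ((hG j) (measurableSet_singleton i)) measurable_const measurable_const
  have hXindep : ∀ i : ℕ,
      iIndepFun (fun (j : Fin m) (ω : Ω) =>
        if G j ω = i then (1:ℝ) else 0) μ := by
    intro i
    have := hind.comp (fun _ (n : ℕ) => if n = i then (1:ℝ) else 0)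
      (fun _ => Measurable.of_discrete)
    simpa [Function.comp_def] using this
  have hX01 : ∀ (i : ℕ) (j : Fin m) (ω : Ω),
      (if G j ω = i then (1:ℝ) else 0) = 0 ∨ (if G j ω = i then (1:ℝ) else 0) = 1 := by
    intro i j ω; by_cases h : G j ω = i <;> simp [h]
  have hXint : ∀ (i : ℕ) (j : Fin m),
      ∫ ω, (if G j ω = i then (1:ℝ) else 0) ∂μ = q ^ i * (1 - q) := by
    intro i j
    rw [my_integral_ite (fun ω => G j ω = i) ((hG j) (measurableSet_singleton i))]
    exact hmass j i
  -- measurability of the levels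
  have hlvlmeas : ∀ i : ℕ, Measurable (fun ω => level (fun j => G j ω) i) := by
    intro i
    have heq : (fun ω => level (fun j => G j ω) i)
        = fun ω => ∑ j : Fin m, if G j ω = i then (1:ℕ) else 0 := by
      funext ω; rw [level, Finset.card_filter]
    rw [heq]
    exact Finset.measurable_sum _ fun j _ =>
      Measurable.ite ((hG j) (measurableSet_singleton i)) measurable_const measurable_const
  set E : Set Ω := {ω | ∀ a b : ℕ, a < K + 1 → K + 1 ≤ b →
      level (fun j => G j ω) b < level (fun j => G j ω) a} with hEdef
  have hEmeas : MeasurableSet E := by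
    have hEeq : E = ⋂ (a : ℕ) (b : ℕ), {ω | a < K + 1 → K + 1 ≤ b →
        level (fun j => G j ω) b < level (fun j => G j ω) a} := by
      ext ω; simp [hEdef, Set.mem_iInter, Set.mem_setOf_eq]
    rw [hEeq]
    refine MeasurableSet.iInter fun a => MeasurableSet.iInter fun b => ?_
    by_cases ha : a < K + 1
    · by_cases hb : K + 1 ≤ b
      · have : {ω : Ω | a < K + 1 → K + 1 ≤ b →
            level (fun j => G j ω) b < level (fun j => G j ω) a}
            = {ω : Ω | (fun ω => level (fun j => G j ω) b) ω
                < (fun ω => level (fun j => G j ω) a) ω} := by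
          ext ω; simp [ha, hb]
        rw [this]
        exact measurableSet_lt (hlvlmeas b) (hlvlmeas a)
      · have : {ω : Ω | a < K + 1 → K + 1 ≤ b →
            level (fun j => G j ω) b < level (fun j => G j ω) a} = Set.univ := by
          ext ω; simp [hb]
        rw [this]; exact MeasurableSet.univ
    · have : {ω : Ω | a < K + 1 → K + 1 ≤ b →
          level (fun j => G j ω) b < level (fun j => G j ω) a} = Set.univ := by
        ext ω; simp [ha]
      rw [this]; exact MeasurableSet.univ
  -- the three bad-event bounds
  have hboundA : ∀ a : ℕ, a < K + 1 →
      (μ {ω | ((level (fun j => G j ω) a : ℕ) : ℝ) ≤ t * m}).toReal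
        ≤ Real.exp (g1 * m) := by
    intro a ha
    have hp : ∀ j : Fin m, pK ≤ ∫ ω, (if G j ω = a then (1:ℝ) else 0) ∂μ := by
      intro j
      rw [hXint a j, hpKdef]
      exact mul_le_mul_of_nonneg_right
        (pow_le_pow_of_le_one hq0.le hq1.le (by omega)) hq1'.le
    have h := tail_lower (μ := μ) (fun j => hXmeas a j) (hXindep a) (hX01 a)
      hs1pos.le hp (θ := t)
    have hset : {ω : Ω | ((level (fun j => G j ω) a : ℕ) : ℝ) ≤ t * m}
        = {ω : Ω | (∑ j : Fin m, if G j ω = a then (1:ℝ) else 0) ≤ t * m} := by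
      ext ω; rw [Set.mem_setOf_eq, Set.mem_setOf_eq, hcast]
    rw [hset, ← hg1def] at *
    exact h
  have hboundB : ∀ b : ℕ, K + 1 ≤ b →
      (μ {ω | t * m ≤ ((level (fun j => G j ω) b : ℕ) : ℝ)}).toReal
        ≤ Real.exp (g2 * m) := by
    intro b hb
    have hp : ∀ j : Fin m, ∫ ω, (if G j ω = b then (1:ℝ) else 0) ∂μ ≤ pK1 := by
      intro j
      rw [hXint b j, hpK1def]
      exact mul_le_mul_of_nonneg_right
        (pow_le_pow_of_le_one hq0.le hq1.le hb) hq1'.le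
    have h := tail_upper (μ := μ) (fun j => hXmeas b j) (hXindep b) (hX01 b)
      hs2pos.le hp (θ := t)
    have hset : {ω : Ω | t * m ≤ ((level (fun j => G j ω) b : ℕ) : ℝ)}
        = {ω : Ω | t * m ≤ ∑ j : Fin m, if G j ω = b then (1:ℝ) else 0} := by
      ext ω; rw [Set.mem_setOf_eq, Set.mem_setOf_eq, hcast]
    rw [hset, ← hg2def] at *
    exact h
  have hboundD : ∀ j : Fin m,
      (μ {ω | K + 1 + m ≤ G j ω}).toReal = q ^ (K + 1 + m) :=
    fun j => geom_tail (G j) (hG j) q (hmass j) (K + 1 + m)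
  -- inclusion of the complement in the union of bad events
  set U1 : Set Ω := ⋃ a ∈ Finset.range (K + 1),
    {ω | ((level (fun j => G j ω) a : ℕ) : ℝ) ≤ t * m} with hU1def
  set U2 : Set Ω := ⋃ b ∈ Finset.Ico (K + 1) (K + 1 + m),
    {ω | t * m ≤ ((level (fun j => G j ω) b : ℕ) : ℝ)} with hU2def
  set U3 : Set Ω := ⋃ j ∈ (Finset.univ : Finset (Fin m)), {ω | K + 1 + m ≤ G j ω} with hU3def
  have hsub' : (U1 ∪ (U2 ∪ U3))ᶜ ⊆ E := by
    intro ω hω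
    have hω1 : ω ∉ U1 := fun h => hω (Or.inl h)
    have hω2 : ω ∉ U2 := fun h => hω (Or.inr (Or.inl h))
    have hω3 : ω ∉ U3 := fun h => hω (Or.inr (Or.inr h))
    have h1 : ∀ a : ℕ, a < K + 1 → t * m < ((level (fun j => G j ω) a : ℕ) : ℝ) := by
      intro a ha
      by_contra hle
      exact hω1 (Set.mem_biUnion (Finset.mem_range.mpr ha) (not_lt.mp hle))
    have h2 : ∀ b : ℕ, K + 1 ≤ b → b < K + 1 + m →
        ((level (fun j => G j ω) b : ℕ) : ℝ) < t * m := by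
      intro b hb hbm
      by_contra hle
      exact hω2 (Set.mem_biUnion (Finset.mem_Ico.mpr ⟨hb, hbm⟩) (not_lt.mp hle))
    have h3 : ∀ j : Fin m, G j ω < K + 1 + m := by
      intro j
      by_contra hle
      exact hω3 (Set.mem_biUnion (Finset.mem_univ j) (not_lt.mp hle))
    simp only [hEdef, Set.mem_setOf_eq]
    intro a b ha hb
    by_cases hbm : b < K + 1 + m
    · have hA := h1 a ha
      have hB := h2 b hb hbm
      exact_mod_cast hB.trans hA
    · have hzero : level (fun j => G j ω) b = 0 := by
        rw [level, Finset.card_eq_zero, Finset.filter_eq_empty_iff]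
        intro j _
        have := h3 j
        omega
      have hpos : 0 < level (fun j => G j ω) a := by
        have hA := h1 a ha
        have h0 : (0:ℝ) ≤ t * m := by positivity
        exact_mod_cast h0.trans_lt hA
      omega
  have hsub : Eᶜ ⊆ U1 ∪ (U2 ∪ U3) := by
    intro ω hω
    by_contra hR
    exact hω (hsub' hR)
  -- union bound
  have hEc : (μ Eᶜ).toReal
      ≤ (K + 1 : ℝ) * Real.exp (g1 * m)
        + ((m : ℝ) * Real.exp (g2 * m) + (m : ℝ) * q ^ (K + 1 + m)) := by
    have step1 : (μ Eᶜ).toReal ≤ (μ (U1 ∪ (U2 ∪ U3))).toReal :=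
      ENNReal.toReal_mono (measure_ne_top μ _) (measure_mono hsub)
    have step2 : (μ (U1 ∪ (U2 ∪ U3))).toReal
        ≤ (μ U1).toReal + ((μ U2).toReal + (μ U3).toReal) :=
      (toReal_union_le μ _ _).trans
        (by linarith [toReal_union_le μ U2 U3])
    have b1 : (μ U1).toReal ≤ (K + 1 : ℝ) * Real.exp (g1 * m) := by
      refine (toReal_biUnion_le μ _ _).trans ?_
      have := Finset.sum_le_card_nsmul (Finset.range (K + 1))
        (fun a => (μ {ω | ((level (fun j => G j ω) a : ℕ) : ℝ) ≤ t * m}).toReal)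
        (Real.exp (g1 * m)) (fun a haa => hboundA a (Finset.mem_range.mp haa))
      simpa [Finset.card_range, nsmul_eq_mul] using this
    have b2 : (μ U2).toReal ≤ (m : ℝ) * Real.exp (g2 * m) := by
      refine (toReal_biUnion_le μ _ _).trans ?_
      have := Finset.sum_le_card_nsmul (Finset.Ico (K + 1) (K + 1 + m))
        (fun b => (μ {ω | t * m ≤ ((level (fun j => G j ω) b : ℕ) : ℝ)}).toReal)
        (Real.exp (g2 * m)) (fun b hbb => hboundB b (Finset.mem_Ico.mp hbb).1)
      simpa [Nat.card_Ico, nsmul_eq_mul] using this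
    have b3 : (μ U3).toReal ≤ (m : ℝ) * q ^ (K + 1 + m) := by
      refine (toReal_biUnion_le μ _ _).trans ?_
      have := Finset.sum_le_card_nsmul (Finset.univ : Finset (Fin m))
        (fun j => (μ {ω | K + 1 + m ≤ G j ω}).toReal)
        (q ^ (K + 1 + m)) (fun j _ => (hboundD j).le)
      simpa [Finset.card_univ, nsmul_eq_mul] using this
    linarith
  -- numeric estimates
  have hexpg1 : Real.exp (g1 * m) ≤ Real.exp (-(2 * c) * m) :=
    Real.exp_le_exp.mpr (mul_le_mul_of_nonneg_right hc2g1 (Nat.cast_nonneg m))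
  have hexpg2 : Real.exp (g2 * m) ≤ Real.exp (-(2 * c) * m) :=
    Real.exp_le_exp.mpr (mul_le_mul_of_nonneg_right hc2g2 (Nat.cast_nonneg m))
  have hqm : q ^ (K + 1 + m) ≤ Real.exp (-(2 * c) * m) := by
    have h1 : q ^ (K + 1 + m) ≤ q ^ m := by
      rw [pow_add]
      calc q ^ (K + 1) * q ^ m ≤ 1 * q ^ m :=
            mul_le_mul_of_nonneg_right (pow_le_one₀ hq0.le hq1.le) (pow_nonneg hq0.le m)
        _ = q ^ m := one_mul _
    have h2 : q ^ m = Real.exp ((m : ℝ) * Real.log q) := by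
      rw [Real.exp_nat_mul, Real.exp_log hq0]
    calc q ^ (K + 1 + m) ≤ q ^ m := h1
      _ = Real.exp ((m : ℝ) * Real.log q) := h2
      _ ≤ Real.exp (-(2 * c) * m) := Real.exp_le_exp.mpr (by
          rw [mul_comm]
          exact mul_le_mul_of_nonneg_right hc2q (Nat.cast_nonneg m))
  have hexpsplit : Real.exp (-(2 * c) * m)
      = Real.exp (-c * m) * Real.exp (-c * m) := by
    rw [← Real.exp_add]; ring_nf
  have hexple1 : Real.exp (-c * m) ≤ 1 := by
    rw [← Real.exp_zero]
    apply Real.exp_le_exp.mpr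
    have : (0:ℝ) ≤ c * m := mul_nonneg hcpos.le (Nat.cast_nonneg m)
    linarith
  have hmexp : (m : ℝ) * Real.exp (-c * m) ≤ 1 / c :=
    mul_exp_neg_le c hcpos m (Nat.cast_nonneg m)
  have hfinal : (μ Eᶜ).toReal ≤ ((K + 1 : ℝ) + 2 / c) * Real.exp (-c * m) := by
    have hexppos : 0 < Real.exp (-c * m) := Real.exp_pos _
    have e1 : (K + 1 : ℝ) * Real.exp (g1 * m)
        ≤ (K + 1 : ℝ) * (Real.exp (-c * m) * Real.exp (-c * m)) := by
      rw [← hexpsplit]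
      exact mul_le_mul_of_nonneg_left hexpg1 (by positivity)
    have e2 : (m : ℝ) * Real.exp (g2 * m)
        ≤ (m : ℝ) * (Real.exp (-c * m) * Real.exp (-c * m)) := by
      rw [← hexpsplit]
      exact mul_le_mul_of_nonneg_left hexpg2 (Nat.cast_nonneg m)
    have e3 : (m : ℝ) * q ^ (K + 1 + m)
        ≤ (m : ℝ) * (Real.exp (-c * m) * Real.exp (-c * m)) := by
      rw [← hexpsplit]
      exact mul_le_mul_of_nonneg_left hqm (Nat.cast_nonneg m)
    have e4 : (K + 1 : ℝ) * (Real.exp (-c * m) * Real.exp (-c * m))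
        ≤ (K + 1 : ℝ) * Real.exp (-c * m) := by
      have : (K + 1 : ℝ) * Real.exp (-c * m) * Real.exp (-c * m)
          ≤ (K + 1 : ℝ) * Real.exp (-c * m) * 1 :=
        mul_le_mul_of_nonneg_left hexple1 (by positivity)
      linarith [this]
    have e5 : (m : ℝ) * (Real.exp (-c * m) * Real.exp (-c * m))
        ≤ (1 / c) * Real.exp (-c * m) := by
      have := mul_le_mul_of_nonneg_right hmexp hexppos.le
      linarith [this]
    have hstep : (μ Eᶜ).toReal ≤ ((K:ℝ) + 1) * Real.exp (-c * m)
        + (1 / c * Real.exp (-c * m) + 1 / c * Real.exp (-c * m)) := by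
      linarith [hEc, e1, e2, e3, e4, e5]
    have hring : ((K:ℝ) + 1 + 2 / c) * Real.exp (-c * m)
        = ((K:ℝ) + 1) * Real.exp (-c * m)
          + (1 / c * Real.exp (-c * m) + 1 / c * Real.exp (-c * m)) := by ring
    linarith [hstep, hring.ge]
  have hsum : (μ E).toReal + (μ Eᶜ).toReal = 1 := by
    rw [← ENNReal.toReal_add (measure_ne_top μ E) (measure_ne_top μ Eᶜ),
      measure_add_measure_compl hEmeas]
    simp
  linarith
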